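/- Let f̃(z) = (az+b)/(cz+d) be a Möbius transformation with b = 0 and max{||a|/|λ| − 1|, |c|, ||d|−1|} < γ₀, where γ₀ = (1−β₀)/100, |λ| ≤ β₀|Λ|, and β₀ ∈ (0,1). Then for every z with |z| ≤ 1, |f̃(z)| ≤ |Λ z|; in particular f̃(B(0,r)) ⊂ B(0,|Λ|r) for all r ≤ 1. -/

import Mathlib

/-- Fixed-point-at-zero case: a `γ₀`-deformation `f̃(z)=az/(cz+d)` of `f(z)=λz` with
`b = 0`, `γ₀ = (1−β₀)/100`, `|λ| ≤ β₀|Λ|`, satisfies `|f̃(z)| ≤ |Λz|` for `|z| ≤ 1`;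
in particular `f̃(B(0,r)) ⊆ B(0,|Λ|r)` for all `r ≤ 1`. -/
theorem stmt7 (β₀ : ℝ) (hβ : β₀ ∈ Set.Ioo (0:ℝ) 1)
    (lam Lam a c d : ℂ) (hlam : lam ≠ 0)
    (h1 : ‖lam‖ ≤ β₀ * ‖Lam‖)
    (hdefa : |‖a‖ / ‖lam‖ - 1| < (1 - β₀) / 100)
    (hdefc : ‖c‖ < (1 - β₀) / 100)
    (hdefd : |‖d‖ - 1| < (1 - β₀) / 100) :
    (∀ z : ℂ, ‖z‖ ≤ 1 →
      ‖(a * z) / (c * z + d)‖ ≤ ‖Lam * z‖)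
    ∧ ∀ r : ℝ, r ≤ 1 →
      (fun z : ℂ => (a * z) / (c * z + d)) '' Metric.closedBall 0 r
        ⊆ Metric.closedBall 0 (‖Lam‖ * r) := by
  obtain ⟨hβ0, hβ1⟩ := hβ
  set γ := (1 - β₀) / 100 with hγ
  have hγpos : 0 < γ := by simp only [hγ]; linarith
  have hγsmall : γ < 1/100 := by simp only [hγ]; linarith
  have hlamabs : 0 < ‖lam‖ := norm_pos_iff.mpr hlam
  have hΛ : 0 < ‖Lam‖ := by
    nlinarith [norm_nonneg Lam]
  have ha : ‖a‖ ≤ (1 + γ) * ‖lam‖ := by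
    have h2 := (abs_lt.mp hdefa).2
    have := (div_lt_iff₀ hlamabs).mp (by linarith : ‖a‖ / ‖lam‖ < 1 + γ)
    linarith
  have hd : 1 - γ ≤ ‖d‖ := by
    have := (abs_lt.mp hdefd).1
    linarith
  have key : ∀ z : ℂ, ‖z‖ ≤ 1 →
      ‖(a * z) / (c * z + d)‖ ≤ ‖Lam‖ * ‖z‖ := by
    intro z hz
    have hzn : 0 ≤ ‖z‖ := norm_nonneg z
    have hcz : ‖c * z‖ ≤ γ := by
      rw [norm_mul]
      calc ‖c‖ * ‖z‖ ≤ γ * 1 :=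
        mul_le_mul hdefc.le hz hzn hγpos.le
      _ = γ := mul_one γ
    have hden : 1 - 2 * γ ≤ ‖c * z + d‖ := by
      have htri : ‖d‖ ≤ ‖c * z + d‖ + ‖c * z‖ := by
        calc ‖d‖ = ‖(c * z + d) - c * z‖ := by ring_nf
        _ ≤ _ := norm_sub_le _ _
      linarith
    have hdenpos : 0 < ‖c * z + d‖ := by linarith
    rw [norm_div, norm_mul, div_le_iff₀ hdenpos]
    have hβγ : (1 + γ) * β₀ ≤ 1 - 2 * γ := by
      simp only [hγ]; nlinarith
    have haz : ‖a‖ * ‖z‖ ≤ (1 + γ) * β₀ * ‖Lam‖ * ‖z‖ := by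
      have h3 : ‖a‖ ≤ (1 + γ) * (β₀ * ‖Lam‖) := by
        calc ‖a‖ ≤ (1 + γ) * ‖lam‖ := ha
        _ ≤ (1 + γ) * (β₀ * ‖Lam‖) := by nlinarith
      nlinarith
    calc ‖a‖ * ‖z‖
        ≤ (1 + γ) * β₀ * ‖Lam‖ * ‖z‖ := haz
      _ ≤ (1 - 2 * γ) * (‖Lam‖ * ‖z‖) := by
          nlinarith [mul_le_mul_of_nonneg_right hβγ (mul_nonneg hΛ.le hzn)]
      _ ≤ ‖Lam‖ * ‖z‖ * ‖c * z + d‖ := by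
          nlinarith [mul_le_mul_of_nonneg_left hden (mul_nonneg hΛ.le hzn)]
  constructor
  · intro z hz
    rw [norm_mul]
    exact key z hz
  · intro r hr w hw
    obtain ⟨z, hz, rfl⟩ := hw
    simp only [Metric.mem_closedBall, dist_zero_right] at hz ⊢
    have hzr : ‖z‖ ≤ r := hz
    have := key z (le_trans hzr hr)
    calc ‖(a * z) / (c * z + d)‖ ≤ ‖Lam‖ * ‖z‖ := this
      _ ≤ ‖Lam‖ * r := by nlinarith [norm_nonneg z]
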